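/- The density of coprime lattice points: for the triangle Δ_{p,q} = {(x,y) ∈ (0,∞)² : px + qy ≤ 1} with p,q positive reals, the limit as L → ∞ of (1/L²) times the number of pairs (a,b) of positive integers with gcd(a,b) = 1 lying in L·Δ_{p,q} equals (6/π²)·(1/(2pq)). -/

import Mathlib

open Filter Finset Topology

open scoped Classical in
noncomputable def triAll (p q L : ℝ) : Finset (ℤ × ℤ) :=
  (Finset.Icc 1 ⌊L/p⌋ ×ˢ Finset.Icc 1 ⌊L/q⌋).filter
    (fun ab => 0 < ab.1 ∧ 0 < ab.2 ∧ p*(ab.1:ℝ) + q*(ab.2:ℝ) ≤ L)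

lemma mem_triAll {p q : ℝ} (hp : 0 < p) (hq : 0 < q) {L : ℝ} {ab : ℤ × ℤ} :
    ab ∈ triAll p q L ↔ 0 < ab.1 ∧ 0 < ab.2 ∧ p*(ab.1:ℝ) + q*(ab.2:ℝ) ≤ L := by
  classical
  unfold triAll
  simp only [Finset.mem_filter, Finset.mem_product, Finset.mem_Icc]
  refine ⟨fun h => h.2, fun h => ⟨⟨⟨h.1, ?_⟩, ⟨h.2.1, ?_⟩⟩, h⟩⟩
  · rw [Int.le_floor, le_div_iff₀ hp]
    have hb : (0:ℝ) < (ab.2 : ℝ) := by exact_mod_cast h.2.1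
    nlinarith [h.2.2]
  · rw [Int.le_floor, le_div_iff₀ hq]
    have ha : (0:ℝ) < (ab.1 : ℝ) := by exact_mod_cast h.1
    nlinarith [h.2.2]

lemma triAll_eq_empty {p q : ℝ} (hp : 0 < p) (hq : 0 < q) {L : ℝ} (hL : L < p + q) :
    triAll p q L = ∅ := by
  ext ab
  simp only [Finset.notMem_empty, iff_false, mem_triAll hp hq]
  rintro ⟨h1, h2, h3⟩
  have ha : (1:ℝ) ≤ (ab.1 : ℝ) := by exact_mod_cast h1
  have hb : (1:ℝ) ≤ (ab.2 : ℝ) := by exact_mod_cast h2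
  nlinarith

lemma triAll_card_le {p q : ℝ} (hp : 0 < p) (hq : 0 < q) {L : ℝ} (hL : 0 ≤ L) :
    ((triAll p q L).card : ℝ) ≤ (L/p) * (L/q) := by
  classical
  have h1 : (triAll p q L).card ≤ (Finset.Icc (1:ℤ) ⌊L/p⌋ ×ˢ Finset.Icc (1:ℤ) ⌊L/q⌋).card :=
    Finset.card_filter_le _ _
  have h2 : (Finset.Icc (1:ℤ) ⌊L/p⌋ ×ˢ Finset.Icc (1:ℤ) ⌊L/q⌋).card
      = (⌊L/p⌋ + 1 - 1).toNat * (⌊L/q⌋ + 1 - 1).toNat := by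
    rw [Finset.card_product, Int.card_Icc, Int.card_Icc]
  have hfp : ((⌊L/p⌋ + 1 - 1).toNat : ℝ) ≤ L/p := by
    rw [show ⌊L/p⌋ + 1 - 1 = ⌊L/p⌋ by ring, Int.floor_toNat]
    exact Nat.floor_le (by positivity)
  have hfq : ((⌊L/q⌋ + 1 - 1).toNat : ℝ) ≤ L/q := by
    rw [show ⌊L/q⌋ + 1 - 1 = ⌊L/q⌋ by ring, Int.floor_toNat]
    exact Nat.floor_le (by positivity)
  calc ((triAll p q L).card : ℝ) ≤ (((⌊L/p⌋ + 1 - 1).toNat * (⌊L/q⌋ + 1 - 1).toNat : ℕ) : ℝ) := by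
        exact_mod_cast h2 ▸ h1
    _ ≤ (L/p) * (L/q) := by
        push_cast
        exact mul_le_mul hfp hfq (by positivity) (by positivity)

lemma gaussN (n : ℕ) : (∑ a ∈ Finset.Icc (1:ℕ) n, (a:ℝ)) = n*(n+1)/2 := by
  induction n with
  | zero => simp
  | succ k ih =>
    rw [Finset.sum_Icc_succ_top (Nat.succ_le_succ (Nat.zero_le k)), ih]
    push_cast
    ring

lemma Icc_int_eq_map (A : ℤ) :
    Finset.Icc (1:ℤ) A = Finset.map ⟨((↑·) : ℕ → ℤ), Nat.cast_injective⟩ (Finset.Icc 1 A.toNat) := by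
  ext a
  simp only [Finset.mem_Icc, Finset.mem_map, Function.Embedding.coeFn_mk]
  constructor
  · rintro ⟨h1, h2⟩
    exact ⟨a.toNat, ⟨by omega, by omega⟩, by omega⟩
  · rintro ⟨b, ⟨h1, h2⟩, rfl⟩
    omega

lemma gaussZ (A : ℤ) (hA : 0 ≤ A) :
    (∑ a ∈ Finset.Icc (1:ℤ) A, (a:ℝ)) = (A:ℝ)*((A:ℝ)+1)/2 := by
  rw [Icc_int_eq_map A, Finset.sum_map]
  simp only [Function.Embedding.coeFn_mk, Int.cast_natCast]
  rw [gaussN]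
  have : ((A.toNat : ℕ) : ℝ) = (A:ℝ) := by exact_mod_cast congrArg (fun z : ℤ => (z:ℝ)) (Int.toNat_of_nonneg hA)
  rw [this]

lemma triAll_card_fiber {p q : ℝ} (hp : 0 < p) (hq : 0 < q) {x : ℝ} :
    ((triAll p q x).card : ℝ)
      = ∑ a ∈ Finset.Icc (1:ℤ) ⌊x/p⌋, ((⌊(x - p*(a:ℝ))/q⌋₊ : ℕ) : ℝ) := by
  classical
  have key : (triAll p q x).card
      = ∑ a ∈ Finset.Icc (1:ℤ) ⌊x/p⌋, ((triAll p q x).filter (fun ab => ab.1 = a)).card := by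
    apply Finset.card_eq_sum_card_fiberwise
    intro ab hab
    rw [Finset.mem_coe, mem_triAll hp hq] at hab
    rw [Finset.mem_coe, Finset.mem_Icc]
    refine ⟨hab.1, ?_⟩
    rw [Int.le_floor, le_div_iff₀ hp]
    have hb : (0:ℝ) < (ab.2 : ℝ) := by exact_mod_cast hab.2.1
    nlinarith [hab.2.2]
  rw [key]
  push_cast
  apply Finset.sum_congr rfl
  intro a ha
  rw [Finset.mem_Icc] at ha
  have hfib : (triAll p q x).filter (fun ab => ab.1 = a)
      = Finset.map ⟨fun b => (a, b), show Function.Injective _ from fun b c h => (Prod.mk.injEq _ _ _ _ ▸ h).2⟩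
          (Finset.Icc (1:ℤ) ⌊(x - p*(a:ℝ))/q⌋) := by
    ext ⟨c₁, c₂⟩
    simp only [Finset.mem_filter, mem_triAll hp hq, Finset.mem_map, Finset.mem_Icc,
      Function.Embedding.coeFn_mk, Prod.mk.injEq]
    constructor
    · rintro ⟨⟨h1, h2, h3⟩, rfl⟩
      refine ⟨c₂, ⟨h2, ?_⟩, rfl, rfl⟩
      rw [Int.le_floor, le_div_iff₀ hq]
      linarith
    · rintro ⟨b, ⟨hb1, hb2⟩, rfl, rfl⟩
      have hb2' : (b:ℝ) ≤ (x - p*(a:ℝ))/q := le_trans (Int.cast_le.mpr hb2) (Int.floor_le _)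
      rw [le_div_iff₀ hq] at hb2'
      exact ⟨⟨ha.1, hb1, by linarith⟩, rfl⟩
  rw [hfib, Finset.card_map, Int.card_Icc]
  have : ⌊(x - p*(a:ℝ))/q⌋ + 1 - 1 = ⌊(x - p*(a:ℝ))/q⌋ := by ring
  rw [this, Int.floor_toNat]

lemma triAll_tendsto {p q : ℝ} (hp : 0 < p) (hq : 0 < q) :
    Tendsto (fun x => ((triAll p q x).card : ℝ)/x^2) atTop (𝓝 (1/(2*p*q))) := by
  have hα : Tendsto (fun x : ℝ => ((⌊x/p⌋ : ℤ) : ℝ)/x) atTop (𝓝 (1/p)) := by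
    have h0 : Tendsto (fun x : ℝ => x/p) atTop atTop := tendsto_id.atTop_div_const hp
    have h1 : Tendsto (fun x : ℝ => ((⌊x/p⌋₊ : ℕ) : ℝ)/(x/p)) atTop (𝓝 1) :=
      tendsto_nat_floor_div_atTop.comp h0
    have h2 := h1.mul_const (1/p)
    rw [one_mul] at h2
    refine h2.congr' ?_
    filter_upwards [eventually_gt_atTop 0] with x hx
    have hnn : (0:ℝ) ≤ x/p := by positivity
    have : ((⌊x/p⌋₊ : ℕ) : ℝ) = ((⌊x/p⌋ : ℤ) : ℝ) := by
      rw [← Int.floor_toNat]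
      exact_mod_cast congrArg (fun z : ℤ => (z : ℝ)) (Int.toNat_of_nonneg (Int.floor_nonneg.2 hnn))
    rw [this]
    field_simp
  have h1x : Tendsto (fun x : ℝ => 1/x) atTop (𝓝 0) := by
    simpa [one_div] using tendsto_inv_atTop_zero
  have hU : Tendsto (fun x : ℝ => ((⌊x/p⌋ : ℤ) : ℝ)/x * (1/q)
      - p/(2*q) * (((⌊x/p⌋ : ℤ) : ℝ)/x) * (((⌊x/p⌋ : ℤ) : ℝ)/x + 1/x)) atTop
      (𝓝 (1/p * (1/q) - p/(2*q) * (1/p) * (1/p + 0))) :=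
    (hα.mul_const (1/q)).sub ((tendsto_const_nhds.mul hα).mul (hα.add h1x))
  have hval : 1/p * (1/q) - p/(2*q) * (1/p) * (1/p + 0) = 1/(2*p*q) := by
    field_simp
    ring
  rw [hval] at hU
  have hLo : Tendsto (fun x : ℝ => (((⌊x/p⌋ : ℤ) : ℝ)/x * (1/q)
      - p/(2*q) * (((⌊x/p⌋ : ℤ) : ℝ)/x) * (((⌊x/p⌋ : ℤ) : ℝ)/x + 1/x))
      - ((⌊x/p⌋ : ℤ) : ℝ)/x * (1/x)) atTop (𝓝 (1/(2*p*q) - 1/p * 0)) :=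
    hU.sub (hα.mul h1x)
  rw [mul_zero, sub_zero] at hLo
  refine tendsto_of_tendsto_of_tendsto_of_le_of_le' hLo hU ?_ ?_
  · -- lower bound
    filter_upwards [eventually_ge_atTop 1] with x hx1
    have hx : (0:ℝ) < x := lt_of_lt_of_le one_pos hx1
    have hA0 : (0:ℤ) ≤ ⌊x/p⌋ := Int.floor_nonneg.2 (by positivity)
    have hAx : ((⌊x/p⌋ : ℤ) : ℝ) ≤ x/p := Int.floor_le _
    have htnn : ∀ a ∈ Finset.Icc (1:ℤ) ⌊x/p⌋, (0:ℝ) ≤ (x - p*(a:ℝ))/q := by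
      intro a ha
      rw [Finset.mem_Icc] at ha
      have : (a:ℝ) ≤ ((⌊x/p⌋ : ℤ) : ℝ) := by exact_mod_cast ha.2
      have hpa : p*(a:ℝ) ≤ x := by
        rw [le_div_iff₀ hp] at hAx
        nlinarith
      exact div_nonneg (by linarith) hq.le
    have hcard : ((Finset.Icc (1:ℤ) ⌊x/p⌋).card : ℝ) = ((⌊x/p⌋ : ℤ) : ℝ) := by
      rw [Int.card_Icc, show ⌊x/p⌋ + 1 - 1 = ⌊x/p⌋ by ring]
      exact_mod_cast congrArg (fun z : ℤ => (z : ℝ)) (Int.toNat_of_nonneg hA0)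
    have hsum : ∑ a ∈ Finset.Icc (1:ℤ) ⌊x/p⌋, ((x - p*(a:ℝ))/q)
        = ((⌊x/p⌋ : ℤ) : ℝ)*x/q - (p/q)*(((⌊x/p⌋ : ℤ) : ℝ)*(((⌊x/p⌋ : ℤ) : ℝ)+1)/2) := by
      have : ∀ a ∈ Finset.Icc (1:ℤ) ⌊x/p⌋, (x - p*(a:ℝ))/q = x/q - (p/q)*(a:ℝ) := by
        intro a _; field_simp
      rw [Finset.sum_congr rfl this, Finset.sum_sub_distrib, Finset.sum_const,
        ← Finset.mul_sum, gaussZ _ hA0, nsmul_eq_mul, hcard]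
      ring
    rw [le_div_iff₀ (pow_pos hx 2), triAll_card_fiber hp hq]
    calc (((⌊x/p⌋ : ℤ) : ℝ)/x * (1/q)
          - p/(2*q) * (((⌊x/p⌋ : ℤ) : ℝ)/x) * (((⌊x/p⌋ : ℤ) : ℝ)/x + 1/x)
          - ((⌊x/p⌋ : ℤ) : ℝ)/x * (1/x)) * x^2
        = ∑ a ∈ Finset.Icc (1:ℤ) ⌊x/p⌋, ((x - p*(a:ℝ))/q - 1) := by
          rw [Finset.sum_sub_distrib, hsum, Finset.sum_const, nsmul_eq_mul, mul_one, hcard]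
          field_simp
      _ ≤ ∑ a ∈ Finset.Icc (1:ℤ) ⌊x/p⌋, ((⌊(x - p*(a:ℝ))/q⌋₊ : ℕ) : ℝ) :=
          Finset.sum_le_sum (fun a _ => (Nat.sub_one_lt_floor _).le)
  · -- upper bound
    filter_upwards [eventually_ge_atTop 1] with x hx1
    have hx : (0:ℝ) < x := lt_of_lt_of_le one_pos hx1
    have hA0 : (0:ℤ) ≤ ⌊x/p⌋ := Int.floor_nonneg.2 (by positivity)
    have hAx : ((⌊x/p⌋ : ℤ) : ℝ) ≤ x/p := Int.floor_le _
    have htnn : ∀ a ∈ Finset.Icc (1:ℤ) ⌊x/p⌋, (0:ℝ) ≤ (x - p*(a:ℝ))/q := by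
      intro a ha
      rw [Finset.mem_Icc] at ha
      have : (a:ℝ) ≤ ((⌊x/p⌋ : ℤ) : ℝ) := by exact_mod_cast ha.2
      have hpa : p*(a:ℝ) ≤ x := by
        rw [le_div_iff₀ hp] at hAx
        nlinarith
      exact div_nonneg (by linarith) hq.le
    have hcard : ((Finset.Icc (1:ℤ) ⌊x/p⌋).card : ℝ) = ((⌊x/p⌋ : ℤ) : ℝ) := by
      rw [Int.card_Icc, show ⌊x/p⌋ + 1 - 1 = ⌊x/p⌋ by ring]
      exact_mod_cast congrArg (fun z : ℤ => (z : ℝ)) (Int.toNat_of_nonneg hA0)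
    have hsum : ∑ a ∈ Finset.Icc (1:ℤ) ⌊x/p⌋, ((x - p*(a:ℝ))/q)
        = ((⌊x/p⌋ : ℤ) : ℝ)*x/q - (p/q)*(((⌊x/p⌋ : ℤ) : ℝ)*(((⌊x/p⌋ : ℤ) : ℝ)+1)/2) := by
      have : ∀ a ∈ Finset.Icc (1:ℤ) ⌊x/p⌋, (x - p*(a:ℝ))/q = x/q - (p/q)*(a:ℝ) := by
        intro a _; field_simp
      rw [Finset.sum_congr rfl this, Finset.sum_sub_distrib, Finset.sum_const,
        ← Finset.mul_sum, gaussZ _ hA0, nsmul_eq_mul, hcard]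
      ring
    rw [div_le_iff₀ (pow_pos hx 2), triAll_card_fiber hp hq]
    calc ∑ a ∈ Finset.Icc (1:ℤ) ⌊x/p⌋, ((⌊(x - p*(a:ℝ))/q⌋₊ : ℕ) : ℝ)
        ≤ ∑ a ∈ Finset.Icc (1:ℤ) ⌊x/p⌋, ((x - p*(a:ℝ))/q) :=
          Finset.sum_le_sum (fun a ha => Nat.floor_le (htnn a ha))
      _ = (((⌊x/p⌋ : ℤ) : ℝ)/x * (1/q)
          - p/(2*q) * (((⌊x/p⌋ : ℤ) : ℝ)/x) * (((⌊x/p⌋ : ℤ) : ℝ)/x + 1/x)) * x^2 := by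
          rw [hsum]
          field_simp

open scoped Classical in
noncomputable def triCop (p q L : ℝ) : Finset (ℤ × ℤ) :=
  (triAll p q L).filter (fun ab => Int.gcd ab.1 ab.2 = 1)

lemma nat_dvd_gcd_iff {d : ℕ} {a b : ℤ} :
    d ∣ Int.gcd a b ↔ (d:ℤ) ∣ a ∧ (d:ℤ) ∣ b := by
  constructor
  · intro h
    exact ⟨dvd_trans (Int.natCast_dvd_natCast.2 h) (Int.gcd_dvd_left _ _),
      dvd_trans (Int.natCast_dvd_natCast.2 h) (Int.gcd_dvd_right _ _)⟩
  · rintro ⟨h1, h2⟩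
    exact Int.dvd_gcd h1 h2

lemma triAll_scale {p q : ℝ} (hp : 0 < p) (hq : 0 < q) {L : ℝ} {d : ℕ} (hd : 1 ≤ d) :
    (triAll p q L).filter (fun ab => (d:ℤ) ∣ ab.1 ∧ (d:ℤ) ∣ ab.2)
      = Finset.map ⟨fun ab => ((d:ℤ)*ab.1, (d:ℤ)*ab.2), show Function.Injective _ from by
          intro ab cd h
          have hd0 : (d:ℤ) ≠ 0 := by exact_mod_cast Nat.one_le_iff_ne_zero.mp hd
          rw [Prod.mk.injEq] at h
          exact Prod.ext (mul_left_cancel₀ hd0 h.1) (mul_left_cancel₀ hd0 h.2)⟩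
        (triAll p q (L/d)) := by
  classical
  have hdR : (0:ℝ) < (d:ℝ) := by exact_mod_cast hd
  have hdZ : (0:ℤ) < (d:ℤ) := by exact_mod_cast hd
  ext ⟨c₁, c₂⟩
  simp only [Finset.mem_filter, mem_triAll hp hq, Finset.mem_map,
    Function.Embedding.coeFn_mk, Prod.mk.injEq]
  constructor
  · rintro ⟨⟨h1, h2, h3⟩, ⟨a, rfl⟩, ⟨b, rfl⟩⟩
    have ha : (0:ℤ) < a := by nlinarith
    have hb : (0:ℤ) < b := by nlinarith
    refine ⟨(a, b), ⟨ha, hb, ?_⟩, rfl, rfl⟩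
    rw [le_div_iff₀ hdR]
    push_cast at h3 ⊢
    nlinarith
  · rintro ⟨⟨a, b⟩, ⟨h1, h2, h3⟩, rfl, rfl⟩
    rw [le_div_iff₀ hdR] at h3
    refine ⟨⟨by positivity, by positivity, ?_⟩, ⟨a, rfl⟩, ⟨b, rfl⟩⟩
    push_cast
    push_cast at h3
    nlinarith

open ArithmeticFunction ArithmeticFunction.Moebius in
lemma triCop_card_eq {p q : ℝ} (hp : 0 < p) (hq : 0 < q) (L : ℝ) :
    ((triCop p q L).card : ℤ)
      = ∑ d ∈ Finset.Icc 1 ⌊L/(p+q)⌋₊, μ d * ((triAll p q (L/d)).card : ℤ) := by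
  classical
  set D := ⌊L/(p+q)⌋₊ with hD
  have hgcd_mem : ∀ ab ∈ triAll p q L, Int.gcd ab.1 ab.2 ∈ Finset.Icc 1 D := by
    intro ab hab
    rw [mem_triAll hp hq] at hab
    obtain ⟨h1, h2, h3⟩ := hab
    set g := Int.gcd ab.1 ab.2 with hg
    have hg1 : 1 ≤ g := Int.gcd_pos_of_ne_zero_left _ (by omega)
    have hga : (g:ℤ) ≤ ab.1 := Int.le_of_dvd h1 (Int.gcd_dvd_left _ _)
    have hgb : (g:ℤ) ≤ ab.2 := Int.le_of_dvd h2 (Int.gcd_dvd_right _ _)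
    have hgaR : (g:ℝ) ≤ (ab.1:ℝ) := by exact_mod_cast hga
    have hgbR : (g:ℝ) ≤ (ab.2:ℝ) := by exact_mod_cast hgb
    have hgR : (0:ℝ) < (g:ℝ) := by exact_mod_cast hg1
    rw [Finset.mem_Icc]
    refine ⟨hg1, Nat.le_floor ?_⟩
    rw [le_div_iff₀ (by linarith : (0:ℝ) < p + q)]
    nlinarith
  -- express coprime count as a sum of indicators
  have step1 : ((triCop p q L).card : ℤ)
      = ∑ ab ∈ triAll p q L, (if Int.gcd ab.1 ab.2 = 1 then (1:ℤ) else 0) := by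
    rw [triCop, Finset.card_filter]
    push_cast
    rfl
  -- moebius indicator
  have step2 : ∀ ab ∈ triAll p q L,
      (if Int.gcd ab.1 ab.2 = 1 then (1:ℤ) else 0)
        = ∑ d ∈ Finset.Icc 1 D, (if d ∣ Int.gcd ab.1 ab.2 then μ d else 0) := by
    intro ab hab
    have hmem := hgcd_mem ab hab
    rw [Finset.mem_Icc] at hmem
    set g := Int.gcd ab.1 ab.2 with hg
    have hfilter : (Finset.Icc 1 D).filter (· ∣ g) = g.divisors := by
      ext e
      simp only [Finset.mem_filter, Finset.mem_Icc, Nat.mem_divisors]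
      constructor
      · rintro ⟨⟨he1, he2⟩, hdvd⟩
        exact ⟨hdvd, by omega⟩
      · rintro ⟨hdvd, hne⟩
        have := Nat.le_of_dvd (by omega) hdvd
        have := Nat.pos_of_dvd_of_pos hdvd (by omega)
        exact ⟨⟨by omega, by omega⟩, hdvd⟩
    rw [← Finset.sum_filter, hfilter, ← coe_mul_zeta_apply, moebius_mul_coe_zeta, one_apply]
  rw [step1, Finset.sum_congr rfl step2, Finset.sum_comm]
  apply Finset.sum_congr rfl
  intro d hd
  rw [Finset.mem_Icc] at hd
  have hsum : ∑ ab ∈ triAll p q L, (if d ∣ Int.gcd ab.1 ab.2 then μ d else 0)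
      = μ d * (((triAll p q L).filter (fun ab => (d:ℤ) ∣ ab.1 ∧ (d:ℤ) ∣ ab.2)).card : ℤ) := by
    rw [← Finset.sum_filter]
    have : (triAll p q L).filter (fun ab => d ∣ Int.gcd ab.1 ab.2)
        = (triAll p q L).filter (fun ab => (d:ℤ) ∣ ab.1 ∧ (d:ℤ) ∣ ab.2) := by
      apply Finset.filter_congr
      intro ab _
      simp [nat_dvd_gcd_iff]
    rw [this, Finset.sum_const, nsmul_eq_mul, mul_comm]
  rw [hsum, triAll_scale hp hq hd.1, Finset.card_map]

open ArithmeticFunction ArithmeticFunction.Moebius in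
lemma moebius_tsum_real : ∑' d : ℕ, ((μ d : ℤ) : ℝ)/(d:ℝ)^2 = 6/Real.pi^2 := by
  have hs : (1:ℝ)  < (2:ℂ).re := by norm_num
  have hzeta : riemannZeta 2 = (Real.pi:ℂ)^2/6 := riemannZeta_two
  have hmul := LSeries_one_mul_Lseries_moebius hs
  rw [LSeries_one_eq_riemannZeta hs, hzeta] at hmul
  have hpi : (Real.pi:ℂ)^2 ≠ 0 := by
    simp [Real.pi_ne_zero]
  have hL : LSeries (fun n => (μ n : ℂ)) 2 = 6/(Real.pi:ℂ)^2 := by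
    field_simp at hmul
    rw [eq_div_iff hpi]
    linear_combination hmul
  have hterm : ∀ n : ℕ, LSeries.term (fun n => (μ n : ℂ)) 2 n = (((μ n : ℤ):ℝ)/(n:ℝ)^2 : ℝ) := by
    intro n
    rcases eq_or_ne n 0 with rfl | hn
    · simp [LSeries.term]
    · rw [LSeries.term_of_ne_zero hn]
      push_cast
      rw [Complex.cpow_two]
  have : LSeries (fun n => (μ n : ℂ)) 2 = ((∑' d : ℕ, ((μ d : ℤ) : ℝ)/(d:ℝ)^2 : ℝ) : ℂ) := by
    rw [LSeries, Complex.ofReal_tsum]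
    exact tsum_congr hterm
  rw [this] at hL
  have : ((∑' d : ℕ, ((μ d : ℤ) : ℝ)/(d:ℝ)^2 : ℝ) : ℂ) = ((6/Real.pi^2 : ℝ) : ℂ) := by
    rw [hL]; push_cast; ring
  exact_mod_cast this

open ArithmeticFunction ArithmeticFunction.Moebius in
/-- Density of coprime lattice points in dilated triangles: the number of
coprime pairs `(a,b)` of positive integers with `pa + qb ≤ L`, divided by `L²`,
tends to `(6/π²)·(1/(2pq))` as `L → ∞`. -/
theorem coprime_density_in_triangle (p q : ℝ) (hp : 0 < p) (hq : 0 < q) :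
    Tendsto
      (fun L : ℝ =>
        ((Set.ncard {ab : ℤ × ℤ | 0 < ab.1 ∧ 0 < ab.2 ∧ Int.gcd ab.1 ab.2 = 1 ∧
            p * (ab.1 : ℝ) + q * (ab.2 : ℝ) ≤ L}) : ℝ) / L ^ 2)
      atTop
      (nhds (6 / Real.pi ^ 2 * (1 / (2 * p * q)))) := by
  classical
  have hset : ∀ L : ℝ, {ab : ℤ × ℤ | 0 < ab.1 ∧ 0 < ab.2 ∧ Int.gcd ab.1 ab.2 = 1 ∧
      p * (ab.1 : ℝ) + q * (ab.2 : ℝ) ≤ L} = ↑(triCop p q L) := by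
    intro L
    ext ab
    simp only [Set.mem_setOf_eq, triCop, Finset.coe_filter, mem_triAll hp hq]
    tauto
  simp only [hset, Set.ncard_coe_finset]
  -- the summand functions
  set F : ℝ → ℕ → ℝ := fun L d => ((μ d : ℤ) : ℝ) * ((triAll p q (L/d)).card : ℝ) / L^2 with hF
  set g : ℕ → ℝ := fun d => ((μ d : ℤ) : ℝ)/(d:ℝ)^2 * (1/(2*p*q)) with hg
  have key : ∀ᶠ L in atTop, ((triCop p q L).card : ℝ)/L^2 = ∑' d, F L d := by
    filter_upwards [eventually_ge_atTop 1] with L hL1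
    have hL0 : (0:ℝ) < L := lt_of_lt_of_le one_pos hL1
    have hzero : ∀ d ∉ Finset.Icc 1 ⌊L/(p+q)⌋₊, F L d = 0 := by
      intro d hd
      rw [Finset.mem_Icc] at hd
      push_neg at hd
      rcases Nat.eq_zero_or_pos d with rfl | hd1
      · simp [hF]
      · have hDd : ⌊L/(p+q)⌋₊ < d := hd hd1
        have hpq : (0:ℝ) < p + q := by linarith
        have : L/(p+q) < d := lt_of_lt_of_le (Nat.lt_floor_add_one _)
          (by exact_mod_cast Nat.succ_le_of_lt hDd)
        have hLd : L/(d:ℝ) < p + q := by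
          rw [div_lt_iff₀ (by exact_mod_cast hd1 : (0:ℝ) < (d:ℝ))]
          rw [div_lt_iff₀ hpq] at this
          nlinarith
        simp [hF, triAll_eq_empty hp hq hLd]
    rw [tsum_eq_sum hzero]
    have := triCop_card_eq hp hq L
    have hcast : ((triCop p q L).card : ℝ)
        = ∑ d ∈ Finset.Icc 1 ⌊L/(p+q)⌋₊, ((μ d : ℤ) : ℝ) * ((triAll p q (L/d)).card : ℝ) := by
      exact_mod_cast congrArg (fun z : ℤ => (z:ℝ)) this
    rw [hcast, Finset.sum_div]
  have hbound_summable : Summable (fun d : ℕ => 1/(p*q*(d:ℝ)^2)) := by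
    have h2 : Summable (fun d : ℕ => 1/(d:ℝ)^2) := by
      exact_mod_cast Real.summable_one_div_nat_pow.mpr one_lt_two
    have := h2.mul_left (1/(p*q))
    refine this.congr fun d => ?_
    rw [div_mul_div_comm, one_mul, mul_assoc]
  have hlim : ∀ d : ℕ, Tendsto (fun L => F L d) atTop (𝓝 (g d)) := by
    intro d
    rcases Nat.eq_zero_or_pos d with rfl | hd1
    · simp only [hF, hg]
      simp
    · have hdR : (0:ℝ) < (d:ℝ) := by exact_mod_cast hd1
      have hcomp : Tendsto (fun L : ℝ => ((triAll p q (L/d)).card : ℝ)/(L/d)^2) atTop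
          (𝓝 (1/(2*p*q))) :=
        (triAll_tendsto hp hq).comp (tendsto_id.atTop_div_const hdR)
      have := hcomp.mul_const (((μ d : ℤ) : ℝ)/(d:ℝ)^2)
      have heq : g d = 1/(2*p*q) * (((μ d : ℤ) : ℝ)/(d:ℝ)^2) := by
        simp only [hg]; ring
      rw [heq]
      refine this.congr' ?_
      filter_upwards [eventually_gt_atTop 0] with L hL
      simp only [hF]
      field_simp
  have hbound : ∀ᶠ L in atTop, ∀ d : ℕ, ‖F L d‖ ≤ 1/(p*q*(d:ℝ)^2) := by
    filter_upwards [eventually_ge_atTop 1] with L hL1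
    intro d
    have hL0 : (0:ℝ) < L := lt_of_lt_of_le one_pos hL1
    rcases Nat.eq_zero_or_pos d with rfl | hd1
    · simp [hF]
    · have hdR : (0:ℝ) < (d:ℝ) := by exact_mod_cast hd1
      have hmu : |((μ d : ℤ) : ℝ)| ≤ 1 := by exact_mod_cast abs_moebius_le_one
      have hcard : ((triAll p q (L/d)).card : ℝ) ≤ (L/d/p) * (L/d/q) :=
        triAll_card_le hp hq (by positivity)
      have hcard0 : (0:ℝ) ≤ ((triAll p q (L/d)).card : ℝ) := Nat.cast_nonneg _
      rw [hF, Real.norm_eq_abs, abs_div, abs_mul, abs_of_pos (by positivity : (0:ℝ) < L^2)]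
      have h1 : |((μ d : ℤ) : ℝ)| * |((triAll p q (L/d)).card : ℝ)|
          ≤ 1 * ((L/d/p) * (L/d/q)) := by
        rw [abs_of_nonneg hcard0]
        exact mul_le_mul hmu hcard hcard0 one_pos.le
      calc |((μ d : ℤ) : ℝ)| * |((triAll p q (L/d)).card : ℝ)| / L^2
          ≤ 1 * ((L/d/p) * (L/d/q)) / L^2 := by
            apply div_le_div_of_nonneg_right h1 (by positivity) |>.trans_eq rfl
        _ = 1/(p*q*(d:ℝ)^2) := by
            field_simp
  have hmain := tendsto_tsum_of_dominated_convergence hbound_summable hlim hbound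
  have hgsum : ∑' d, g d = 6/Real.pi^2 * (1/(2*p*q)) := by
    rw [hg, tsum_mul_right, moebius_tsum_real]
  rw [hgsum] at hmain
  exact hmain.congr' (key.mono fun L h => h.symm)
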